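/- Let Ω ⊂ ℝ² be a convex bounded set with nonempty interior whose two vertical support lines are both angular, and let K < ∞ denote the supremum over nonzero u ∈ U_Ω of (∫_Ω u_x² dx dy)/(∫_Ω u_y² dx dy). Let f : ℝ² → ℝ be continuous with f(ζ₁,ζ₂) = f(0,0) + αζ₁ + βζ₂ − aζ₁² + bζ₂² + o(|ζ|²) as |ζ| → 0, where a > 0, b > 0. If b/a > K, then the zero function u ≡ 0 is a local minimum of the functional F(u) = ∫_Ω f(∇u(x,y)) dx dy on U_Ω with respect to the C¹ norm. -/

import Mathlib

open MeasureTheory Real Set Filter Asymptotics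
open Topology

/-- The partial derivative `u_x` (defined via the full derivative; `0` where `u` is
not differentiable). -/
noncomputable def uX (u : ℝ × ℝ → ℝ) (p : ℝ × ℝ) : ℝ := fderiv ℝ u p (1, 0)

/-- The partial derivative `u_y`. -/
noncomputable def uY (u : ℝ × ℝ → ℝ) (p : ℝ × ℝ) : ℝ := fderiv ℝ u p (0, 1)

/-- Membership in the class `U_Ω`: continuous concave functions on `Ω`, differentiable
almost everywhere, with bounded gradient, vanishing on `∂Ω`. -/
def MemU (Ω : Set (ℝ × ℝ)) (u : ℝ × ℝ → ℝ) : Prop :=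
  ContinuousOn u (closure Ω) ∧ ConcaveOn ℝ Ω u ∧
    (∀ᵐ p ∂(volume.restrict Ω), DifferentiableAt ℝ u p) ∧
    (∃ C : ℝ, ∀ p ∈ Ω, DifferentiableAt ℝ u p → ‖fderiv ℝ u p‖ ≤ C) ∧
    (∀ p ∈ frontier Ω, u p = 0)

/-- `∫_Ω u_x² dx dy`. -/
noncomputable def Ix (Ω : Set (ℝ × ℝ)) (u : ℝ × ℝ → ℝ) : ℝ := ∫ p in Ω, (uX u p) ^ 2

/-- `∫_Ω u_y² dx dy`. -/
noncomputable def Iy (Ω : Set (ℝ × ℝ)) (u : ℝ × ℝ → ℝ) : ℝ := ∫ p in Ω, (uY u p) ^ 2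

/-- The abscissa of the left vertical support line of `Ω`. -/
noncomputable def leftX (Ω : Set (ℝ × ℝ)) : ℝ := sInf (Prod.fst '' Ω)

/-- The abscissa of the right vertical support line of `Ω`. -/
noncomputable def rightX (Ω : Set (ℝ × ℝ)) : ℝ := sSup (Prod.fst '' Ω)

/-- The vertical support line `{x = x₀}` of `Ω`, touching `Ω` at the contact point
`(x₀, p₂)`, is angular: every `(x,y) ∈ Ω` satisfies `|y - p₂| ≤ C|x - x₀|`. -/
def AngularSupportAt (Ω : Set (ℝ × ℝ)) (x₀ : ℝ) : Prop :=
  ∃ p₂ : ℝ, (x₀, p₂) ∈ closure Ω ∧ ∃ C > 0, ∀ q ∈ Ω, |q.2 - p₂| ≤ C * |q.1 - x₀|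

/-- The `C¹` norm `sup |u| + sup |u_x| + sup |u_y|`, the suprema over the derivatives
being taken over the points where they exist. -/
noncomputable def C1Norm (Ω : Set (ℝ × ℝ)) (u : ℝ × ℝ → ℝ) : ℝ :=
  sSup ((fun p => |u p|) '' Ω) +
    sSup ((fun p => |uX u p|) '' {p ∈ Ω | DifferentiableAt ℝ u p}) +
    sSup ((fun p => |uY u p|) '' {p ∈ Ω | DifferentiableAt ℝ u p})

/-- The resistance functional `F(u) = ∫_Ω f(∇u) dx dy`. -/
noncomputable def Fres (Ω : Set (ℝ × ℝ)) (f : ℝ × ℝ → ℝ) (u : ℝ × ℝ → ℝ) : ℝ :=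
  ∫ p in Ω, f (uX u p, uY u p)

/-- The zero function is a local minimum of `F` on `U_Ω` in the `C¹` norm. -/
def ZeroIsLocalMin (Ω : Set (ℝ × ℝ)) (f : ℝ × ℝ → ℝ) : Prop :=
  ∃ δ : ℝ, 0 < δ ∧ ∀ u : ℝ × ℝ → ℝ, MemU Ω u → C1Norm Ω u < δ →
    Fres Ω f (fun _ => 0) ≤ Fres Ω f u


-- ===== auxiliary lemmas =====

/-- Non-adjacent slope inequalities for concave functions. -/
lemma concave_slope_three {g : ℝ → ℝ} {s : Set ℝ} (hg : ConcaveOn ℝ s g) {x y z : ℝ}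
    (hx : x ∈ s) (hz : z ∈ s) (hxy : x < y) (hyz : y < z) :
    (g z - g y) / (z - y) ≤ (g z - g x) / (z - x) ∧
    (g z - g x) / (z - x) ≤ (g y - g x) / (y - x) := by
  have hadj := hg.slope_anti_adjacent hx hz hxy hyz
  have h1 : (0:ℝ) < y - x := by linarith
  have h2 : (0:ℝ) < z - y := by linarith
  have h3 : (0:ℝ) < z - x := by linarith
  have hadj' : (g z - g y) * (y - x) ≤ (g y - g x) * (z - y) :=
    (div_le_div_iff₀ h2 h1).1 hadj
  constructor
  · rw [div_le_div_iff₀ h2 h3]; nlinarith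
  · rw [div_le_div_iff₀ h3 h1]; nlinarith

/-- FTC for a.e.-differentiable concave functions vanishing on the boundary of a
bounded convex subset of `ℝ`: the integral of the derivative vanishes. -/
lemma oneD_integral_eq_zero {S : Set ℝ} {g D : ℝ → ℝ} {C : ℝ}
    (hS : Convex ℝ S) (hSb : Bornology.IsBounded S)
    (hg : ContinuousOn g (closure S)) (hconc : ConcaveOn ℝ S g)
    (h0 : ∀ x ∈ frontier S, g x = 0)
    (hd : ∀ᵐ x : ℝ, x ∈ S → (HasDerivAt g (D x) x ∧ |D x| ≤ C)) :
    ∫ x : ℝ, S.indicator D x = 0 := by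
  rcases eq_empty_or_nonempty S with hE | hne
  · simp [hE]
  have hba : BddBelow S := hSb.bddBelow
  have hbb : BddAbove S := hSb.bddAbove
  set l := sInf S with hl
  set r := sSup S with hr
  have hlr : l ≤ r := csInf_le_csSup hne hba hbb
  by_cases hlt : l < r
  swap
  · -- degenerate: S ⊆ {l}
    have hsub : S ⊆ {l} := by
      intro x hx
      have h1 : l ≤ x := csInf_le hba hx
      have h2 : x ≤ r := le_csSup hbb hx
      have : l = r := le_antisymm hlr (not_lt.1 hlt)
      simp only [mem_singleton_iff]; linarith
    have hae : S.indicator D =ᵐ[volume] (fun _ => (0:ℝ)) := by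
      have h1 : ∀ᵐ x : ℝ, x ≠ l := by
        rw [ae_iff]
        convert measure_singleton (μ := (volume : Measure ℝ)) l using 2
        ext x; simp
      filter_upwards [h1] with x hx
      have : x ∉ S := fun hxS => hx (hsub hxS)
      simp [this]
    rw [integral_congr_ae hae, integral_zero]
  -- main case
  have hIoo : Ioo l r ⊆ S := by
    intro x hx
    obtain ⟨x1, hx1S, hx1⟩ := exists_lt_of_csInf_lt hne hx.1
    obtain ⟨x2, hx2S, hx2⟩ := exists_lt_of_lt_csSup hne hx.2
    exact hS.ordConnected.out hx1S hx2S ⟨hx1.le, hx2.le⟩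
  have hSIcc : S ⊆ Icc l r := fun x hx => ⟨csInf_le hba hx, le_csSup hbb hx⟩
  have hclo : closure S = Icc l r := by
    apply Subset.antisymm (closure_minimal hSIcc isClosed_Icc)
    rw [← closure_Ioo hlt.ne]
    exact closure_mono hIoo
  have hgc : ContinuousOn g (Icc l r) := hclo ▸ hg
  have hfl : l ∈ frontier S := by
    refine ⟨by rw [hclo]; exact ⟨le_refl _, hlr⟩, fun hin => ?_⟩
    rw [mem_interior_iff_mem_nhds, Metric.mem_nhds_iff] at hin
    obtain ⟨ε, hε, hball⟩ := hin
    have : l - ε / 2 ∈ S := hball (by simp [Real.dist_eq, abs_of_nonneg hε.le]; linarith)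
    have := csInf_le hba this
    linarith
  have hfr : r ∈ frontier S := by
    refine ⟨by rw [hclo]; exact ⟨hlr, le_refl _⟩, fun hin => ?_⟩
    rw [mem_interior_iff_mem_nhds, Metric.mem_nhds_iff] at hin
    obtain ⟨ε, hε, hball⟩ := hin
    have : r + ε / 2 ∈ S := hball (by simp [Real.dist_eq, abs_of_nonneg hε.le]; linarith)
    have := le_csSup hbb this
    linarith
  have hgl : g l = 0 := h0 l hfl
  have hgr : g r = 0 := h0 r hfr
  set P : ℝ → Prop := fun x => HasDerivAt g (D x) x ∧ |D x| ≤ C with hP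
  -- density of good points
  have hdense : ∀ a b : ℝ, l ≤ a → a < b → b ≤ r → ∃ ξ, ξ ∈ Ioo a b ∧ P ξ := by
    intro a b hla hab hbr
    by_contra hcon
    push_neg at hcon
    have hsub : Ioo a b ⊆ {x | ¬ (x ∈ S → P x)} := by
      intro x hx
      have hxS : x ∈ S := hIoo ⟨lt_of_le_of_lt hla hx.1, lt_of_lt_of_le hx.2 hbr⟩
      simp only [mem_setOf_eq, Classical.not_imp]
      exact ⟨hxS, hcon x hx⟩
    have hnull : volume (Ioo a b) = 0 := measure_mono_null hsub (ae_iff.1 hd)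
    rw [Real.volume_Ioo, ENNReal.ofReal_eq_zero] at hnull
    linarith
  -- the right derivative
  set D' : ℝ → ℝ := fun x => sSup ((fun z => (g z - g x) / (z - x)) '' Ioo x r) with hD'
  have hne' : ∀ x ∈ Ioo l r, ((fun z => (g z - g x) / (z - x)) '' Ioo x r).Nonempty :=
    fun x hx => (nonempty_Ioo.2 hx.2).image _
  -- upper bound by slope to any left point
  have hub : ∀ x ∈ Ioo l r, ∀ w ∈ Ioo l x, ∀ v ∈ (fun z => (g z - g x) / (z - x)) '' Ioo x r,
      v ≤ (g x - g w) / (x - w) := by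
    rintro x hx w hw v ⟨z, hz, rfl⟩
    exact hconc.slope_anti_adjacent (hIoo ⟨hw.1, hw.2.trans hx.2⟩)
      (hIoo ⟨hx.1.trans hz.1, hz.2⟩) hw.2 hz.1
  have hbddA : ∀ x ∈ Ioo l r, BddAbove ((fun z => (g z - g x) / (z - x)) '' Ioo x r) := by
    intro x hx
    obtain ⟨w, hw, -⟩ := hdense l x le_rfl hx.1 hx.2.le
    exact ⟨_, fun v hv => hub x hx w hw v hv⟩
  -- derivative at a good point dominates slopes to the right
  have hderiv_ge : ∀ ξ t : ℝ, ξ ∈ Ioo l r → t ∈ Ioo ξ r → P ξ →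
      (g t - g ξ) / (t - ξ) ≤ D ξ := by
    intro ξ t hξ ht hPξ
    have htend : Tendsto (slope g ξ) (𝓝[>] ξ) (𝓝 (D ξ)) :=
      (hasDerivAt_iff_tendsto_slope.1 hPξ.1).mono_left
        (nhdsWithin_mono _ fun y hy => ne_of_gt hy)
    refine ge_of_tendsto htend ?_
    filter_upwards [Ioo_mem_nhdsGT ht.1] with s hs
    rw [slope_def_field]
    exact (concave_slope_three hconc (hIoo hξ) (hIoo ⟨hξ.1.trans ht.1, ht.2⟩) hs.1 hs.2).2
  -- derivative at a good point is dominated by slopes from the left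
  have hderiv_le : ∀ t ζ : ℝ, ζ ∈ Ioo l r → t ∈ Ioo l ζ → P ζ →
      D ζ ≤ (g ζ - g t) / (ζ - t) := by
    intro t ζ hζ ht hPζ
    have htend : Tendsto (slope g ζ) (𝓝[<] ζ) (𝓝 (D ζ)) :=
      (hasDerivAt_iff_tendsto_slope.1 hPζ.1).mono_left
        (nhdsWithin_mono _ fun y hy => ne_of_lt hy)
    refine le_of_tendsto htend ?_
    filter_upwards [Ioo_mem_nhdsLT ht.2] with s hs
    rw [slope_comm, slope_def_field]
    exact (concave_slope_three hconc (hIoo ⟨ht.1, ht.2.trans hζ.2⟩) (hIoo hζ) hs.1 hs.2).1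
  -- bounds for D' on Ioo l r
  have hD'le : ∀ x ∈ Ioo l r, D' x ≤ C := by
    intro x hx
    obtain ⟨ξ, hξ, hPξ⟩ := hdense l x le_rfl hx.1 hx.2.le
    have hξI : ξ ∈ Ioo l r := ⟨hξ.1, hξ.2.trans hx.2⟩
    refine csSup_le (hne' x hx) ?_
    rintro v ⟨z, hz, rfl⟩
    have h1 : (g z - g x) / (z - x) ≤ (g x - g ξ) / (x - ξ) :=
      hconc.slope_anti_adjacent (hIoo hξI) (hIoo ⟨hx.1.trans hz.1, hz.2⟩) hξ.2 hz.1
    have h2 : (g x - g ξ) / (x - ξ) ≤ D ξ :=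
      hderiv_ge ξ x hξI ⟨hξ.2, hx.2⟩ hPξ
    have h3 : D ξ ≤ C := (abs_le.1 hPξ.2).2
    linarith
  have hD'ge : ∀ x ∈ Ioo l r, -C ≤ D' x := by
    intro x hx
    obtain ⟨ζ, hζ, hPζ⟩ := hdense x r hx.1.le hx.2 le_rfl
    have hζI : ζ ∈ Ioo l r := ⟨hx.1.trans hζ.1, hζ.2⟩
    have h1 : D ζ ≤ (g ζ - g x) / (ζ - x) := hderiv_le x ζ hζI ⟨hx.1, hζ.1⟩ hPζ
    have h2 : (g ζ - g x) / (ζ - x) ≤ D' x := by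
      refine le_csSup (hbddA x hx) ?_
      exact ⟨ζ, hζ, rfl⟩
    have h3 : -C ≤ D ζ := (abs_le.1 hPζ.2).1
    linarith
  -- antitone
  have hD'anti : AntitoneOn D' (Ioo l r) := by
    intro x1 hx1 x2 hx2 h12
    rcases eq_or_lt_of_le h12 with rfl | h12
    · exact le_refl _
    refine csSup_le (hne' x2 hx2) ?_
    rintro v ⟨z, hz, rfl⟩
    have h1 : (g z - g x2) / (z - x2) ≤ (g x2 - g x1) / (x2 - x1) :=
      hconc.slope_anti_adjacent (hIoo hx1) (hIoo ⟨hx2.1.trans hz.1, hz.2⟩) h12 hz.1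
    have h2 : (g x2 - g x1) / (x2 - x1) ≤ D' x1 :=
      le_csSup (hbddA x1 hx1) ⟨x2, ⟨h12, hx2.2⟩, rfl⟩
    linarith
  -- D' is a right derivative of g
  have hD'deriv : ∀ x ∈ Ioo l r, HasDerivWithinAt g (D' x) (Ioi x) x := by
    intro x hx
    rw [hasDerivWithinAt_iff_tendsto_slope]
    have hId : Ioi x \ {x} = Ioi x := Set.diff_singleton_eq_self (by simp)
    rw [hId, tendsto_order]
    constructor
    · intro c hc
      obtain ⟨v, ⟨z, hz, rfl⟩, hv⟩ := exists_lt_of_lt_csSup (hne' x hx) hc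
      filter_upwards [Ioo_mem_nhdsGT hz.1] with s hs
      rw [slope_def_field]
      have := (concave_slope_three hconc (hIoo hx) (hIoo ⟨hx.1.trans hz.1, hz.2⟩) hs.1 hs.2).2
      linarith
    · intro c hc
      filter_upwards [Ioo_mem_nhdsGT hx.2] with s hs
      rw [slope_def_field]
      have : (g s - g x) / (s - x) ≤ D' x := le_csSup (hbddA x hx) ⟨s, hs, rfl⟩
      linarith
  -- integrability of D'
  haveI hfinIoo : IsFiniteMeasure (volume.restrict (Ioo l r)) :=
    ⟨by rw [Measure.restrict_apply_univ, Real.volume_Ioo]; exact ENNReal.ofReal_lt_top⟩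
  have hIntOn : IntegrableOn D' (Ioo l r) := by
    refine ⟨(aemeasurable_restrict_of_antitoneOn measurableSet_Ioo hD'anti).aestronglyMeasurable,
      HasFiniteIntegral.of_bounded (C := C) ?_⟩
    rw [ae_restrict_iff' measurableSet_Ioo]
    filter_upwards with x hx
    rw [Real.norm_eq_abs, abs_le]
    exact ⟨hD'ge x hx, hD'le x hx⟩
  have hInt : IntervalIntegrable D' volume l r := by
    rw [intervalIntegrable_iff_integrableOn_Ioc_of_le hlt.le]
    exact hIntOn.congr_set_ae Ioo_ae_eq_Ioc.symm
  -- FTC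
  have hFTC : ∫ t in l..r, D' t = g r - g l :=
    intervalIntegral.integral_eq_sub_of_hasDeriv_right_of_le hlt.le hgc hD'deriv hInt
  -- put everything together
  have step1 : ∫ x : ℝ, S.indicator D x = ∫ x : ℝ, (Ioo l r).indicator D x := by
    refine integral_congr_ae ?_
    have hpair : ∀ᵐ x : ℝ, x ∉ ({l, r} : Set ℝ) := by
      rw [ae_iff]
      have h0 : volume ({l, r} : Set ℝ) = 0 := Set.Finite.measure_zero (Set.toFinite _) volume
      convert h0 using 2
      ext a; simp [or_iff_not_imp_left]
    filter_upwards [hpair] with x hx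
    by_cases hxS : x ∈ S
    · have hxI : x ∈ Ioo l r := by
        rcases (hSIcc hxS).1.lt_or_eq with h1 | h1
        · rcases (hSIcc hxS).2.lt_or_eq with h2 | h2
          · exact ⟨h1, h2⟩
          · exact absurd (by simp [h2]) hx
        · exact absurd (by simp [← h1]) hx
      rw [indicator_of_mem hxS, indicator_of_mem hxI]
    · have hxI : x ∉ Ioo l r := fun h => hxS (hIoo h)
      rw [indicator_of_notMem hxS, indicator_of_notMem hxI]
  have step2 : ∫ x : ℝ, (Ioo l r).indicator D x = ∫ x in Ioo l r, D x :=
    integral_indicator measurableSet_Ioo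
  have step3 : ∫ x in Ioo l r, D x = ∫ x in Ioo l r, D' x := by
    refine integral_congr_ae ?_
    have h1 : ∀ᵐ x ∂(volume.restrict (Ioo l r)), x ∈ S → P x := ae_restrict_of_ae hd
    have h2 : ∀ᵐ x ∂(volume.restrict (Ioo l r)), x ∈ Ioo l r :=
      ae_restrict_mem measurableSet_Ioo
    filter_upwards [h1, h2] with x hx1 hx2
    have hPx : P x := hx1 (hIoo hx2)
    have t1 : Tendsto (slope g x) (𝓝[>] x) (𝓝 (D x)) :=
      (hasDerivAt_iff_tendsto_slope.1 hPx.1).mono_left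
        (nhdsWithin_mono _ fun y hy => ne_of_gt hy)
    have t2 : Tendsto (slope g x) (𝓝[>] x) (𝓝 (D' x)) := by
      have h := hasDerivWithinAt_iff_tendsto_slope.1 (hD'deriv x hx2)
      have hId : Ioi x \ {x} = Ioi x := Set.diff_singleton_eq_self (by simp)
      rwa [hId] at h
    exact tendsto_nhds_unique t1 t2
  have step4 : ∫ x in Ioo l r, D' x = ∫ x in Ioc l r, D' x :=
    setIntegral_congr_set Ioo_ae_eq_Ioc
  have step5 : ∫ x in Ioc l r, D' x = ∫ t in l..r, D' t :=
    (intervalIntegral.integral_of_le hlt.le).symm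
  rw [step1, step2, step3, step4, step5, hFTC, hgl, hgr, sub_zero]

lemma integral_uX_eq_zero {Ω : Set (ℝ × ℝ)} (hconv : Convex ℝ Ω)
    (hbdd : Bornology.IsBounded Ω) {u : ℝ × ℝ → ℝ} (hu : MemU Ω u) :
    ∫ p in Ω, uX u p = 0 := by
  obtain ⟨hcont, hconc, hdiff, ⟨C, hC⟩, hbound⟩ := hu
  set C' := max C 0 with hC'
  -- bound on uX everywhere on Ω
  have hbnd : ∀ p ∈ Ω, |uX u p| ≤ C' := by
    intro p hp
    by_cases hdp : DifferentiableAt ℝ u p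
    · calc |uX u p| = ‖fderiv ℝ u p (1, 0)‖ := by rw [Real.norm_eq_abs]; rfl
        _ ≤ ‖fderiv ℝ u p‖ * ‖((1:ℝ), (0:ℝ))‖ := (fderiv ℝ u p).le_opNorm _
        _ = ‖fderiv ℝ u p‖ := by simp [Prod.norm_def]
        _ ≤ C' := (hC p hp hdp).trans (le_max_left _ _)
    · simp only [uX, fderiv_zero_of_not_differentiableAt hdp]
      simp [hC', le_max_right C 0]
  -- the null "bad" set
  have hfront : volume (frontier Ω) = 0 := hconv.addHaar_frontier volume
  set M : Set (ℝ × ℝ) :=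
    (closure Ω ∩ {p | DifferentiableAt ℝ u p}ᶜ) ∪ frontier Ω with hMdef
  have hM : MeasurableSet M :=
    (isClosed_closure.measurableSet.inter
      (measurableSet_of_differentiableAt ℝ u).compl).union
      isClosed_frontier.measurableSet
  have hnd : volume ({p | DifferentiableAt ℝ u p}ᶜ ∩ Ω) = 0 := by
    have h1 := hdiff
    rw [ae_iff] at h1
    have h2 : (volume.restrict Ω) ({p | DifferentiableAt ℝ u p}ᶜ) = 0 := h1
    rwa [Measure.restrict_apply (measurableSet_of_differentiableAt ℝ u).compl] at h2
  have hM0 : volume M = 0 := by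
    refine measure_union_null (measure_mono_null ?_ (measure_union_null hnd hfront)) hfront
    intro p hp
    rcases (closure_eq_interior_union_frontier Ω ▸ hp.1) with h | h
    · exact Or.inl ⟨hp.2, interior_subset h⟩
    · exact Or.inr h
  -- a.e. slices avoid M
  have haeM : ∀ᵐ y : ℝ, ∀ᵐ x : ℝ, (x, y) ∉ M := by
    have hswap : (volume.prod volume) (Prod.swap ⁻¹' M) = 0 := by
      rw [Measure.measurePreserving_swap.measure_preimage hM.nullMeasurableSet]
      exact hM0
    have hae : ∀ᵐ q : ℝ × ℝ ∂(volume.prod volume), Prod.swap q ∉ M := by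
      rw [ae_iff]
      convert hswap using 2
      ext q; simp [Set.mem_preimage]
    exact Measure.ae_ae_of_ae_prod hae
  -- restrict to closure
  have hΩae : Ω =ᵐ[volume] closure Ω := by
    rw [ae_eq_set]
    constructor
    · have he : Ω \ closure Ω = ∅ := diff_eq_empty.2 subset_closure
      rw [he]; exact measure_empty
    · refine measure_mono_null (fun p hp => ?_) hfront
      rcases (closure_eq_interior_union_frontier Ω ▸ hp.1) with h | h
      · exact absurd (interior_subset h) hp.2
      · exact h
  have hΩcl : (volume : Measure (ℝ × ℝ)).restrict Ω = volume.restrict (closure Ω) :=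
    Measure.restrict_congr_set hΩae
  -- integrability
  haveI : IsFiniteMeasure ((volume : Measure (ℝ × ℝ)).restrict Ω) :=
    ⟨by rw [Measure.restrict_apply_univ]; exact hbdd.measure_lt_top⟩
  have hXmeas : Measurable (uX u) := measurable_fderiv_apply_const ℝ u (1, 0)
  have hIntΩ : IntegrableOn (uX u) Ω volume := by
    refine ⟨hXmeas.aestronglyMeasurable, HasFiniteIntegral.of_bounded (C := C') ?_⟩
    have hmem : ∀ᵐ p ∂volume.restrict Ω, p ∈ Ω :=
      ae_restrict_mem₀ (nullMeasurableSet_of_null_frontier hfront)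
    filter_upwards [hmem] with p hp
    rw [Real.norm_eq_abs]; exact hbnd p hp
  have hIntCl : IntegrableOn (uX u) (closure Ω) volume := by
    rw [IntegrableOn, ← hΩcl]; exact hIntΩ
  have hIntInd : Integrable ((closure Ω).indicator (uX u)) volume :=
    (integrable_indicator_iff isClosed_closure.measurableSet).2 hIntCl
  have hIntInd' : Integrable ((closure Ω).indicator (uX u)) (volume.prod volume) := hIntInd
  -- a.e. inner integral vanishes
  have key : ∀ᵐ y : ℝ, ∫ x : ℝ, (closure Ω).indicator (uX u) (x, y) = 0 := by
    filter_upwards [haeM] with y hy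
    set S : Set ℝ := {x | (x, y) ∈ Ω} with hSdef
    have hcomb : ∀ (x1 x2 a b : ℝ), a + b = 1 →
        a • ((x1 : ℝ), y) + b • ((x2 : ℝ), y) = (a • x1 + b • x2, y) := by
      intro x1 x2 a b hab
      have h3 : a * y + b * y = y := by rw [← add_mul, hab, one_mul]
      simp [Prod.ext_iff, h3]
    have hSconv : Convex ℝ S := by
      intro x1 hx1 x2 hx2 a b ha hb hab
      have h2 := hconv hx1 hx2 ha hb hab
      rw [hcomb x1 x2 a b hab] at h2
      exact h2
    have hSbd : Bornology.IsBounded S :=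
      (hbdd.image_fst).subset (fun x hx => ⟨(x, y), hx, rfl⟩)
    set g : ℝ → ℝ := fun x => u (x, y) with hgdef
    have hmap : Continuous (fun x : ℝ => (x, y)) := continuous_id.prodMk continuous_const
    have hclS : ∀ x ∈ closure S, (x, y) ∈ closure Ω := by
      intro x hx
      have h1 : (x, y) ∈ closure ((fun x : ℝ => (x, y)) '' S) :=
        (image_closure_subset_closure_image hmap) ⟨x, hx, rfl⟩
      exact closure_mono (by rintro _ ⟨z, hz, rfl⟩; exact hz) h1
    have hgcont : ContinuousOn g (closure S) :=
      hcont.comp hmap.continuousOn hclS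
    have hgconc : ConcaveOn ℝ S g := by
      refine ⟨hSconv, fun x1 hx1 x2 hx2 a b ha hb hab => ?_⟩
      have h2 := hconc.2 hx1 hx2 ha hb hab
      rw [hcomb x1 x2 a b hab] at h2
      exact h2
    have hg0 : ∀ x ∈ frontier S, g x = 0 := by
      intro x hx
      apply hbound
      refine ⟨hclS x hx.1, fun hin => hx.2 ?_⟩
      rw [mem_interior_iff_mem_nhds] at hin ⊢
      exact hmap.continuousAt.preimage_mem_nhds hin
    have hdae : ∀ᵐ x : ℝ, x ∈ S →
        (HasDerivAt g (uX u (x, y)) x ∧ |uX u (x, y)| ≤ C') := by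
      filter_upwards [hy] with x hxM hxS
      have hdp : DifferentiableAt ℝ u (x, y) := by
        by_contra hndp
        exact hxM (Or.inl ⟨subset_closure hxS, hndp⟩)
      refine ⟨?_, hbnd (x, y) hxS⟩
      have hcurve : HasDerivAt (fun t : ℝ => ((t : ℝ), y)) ((1 : ℝ), (0 : ℝ)) x :=
        (hasDerivAt_id x).prodMk (hasDerivAt_const x y)
      exact hdp.hasFDerivAt.comp_hasDerivAt x hcurve
    have h1D := oneD_integral_eq_zero hSconv hSbd hgcont hgconc hg0 hdae
    have heq : (fun x : ℝ => (closure Ω).indicator (uX u) (x, y)) =ᵐ[volume]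
        (fun x : ℝ => S.indicator (fun x => uX u (x, y)) x) := by
      filter_upwards [hy] with x hxM
      by_cases hxS : x ∈ S
      · rw [indicator_of_mem (subset_closure (show (x, y) ∈ Ω from hxS)), indicator_of_mem hxS]
      · have hncl : (x, y) ∉ closure Ω := by
          intro hcl
          have hfr : (x, y) ∉ frontier Ω := fun h => hxM (Or.inr h)
          rcases (closure_eq_interior_union_frontier Ω ▸ hcl) with h | h
          · have hmem : (x, y) ∈ Ω := interior_subset h
            exact hxS hmem
          · exact hfr h
        rw [indicator_of_notMem hncl, indicator_of_notMem hxS]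
    rw [integral_congr_ae heq]
    exact h1D
  -- put it together
  calc ∫ p in Ω, uX u p = ∫ p in closure Ω, uX u p := by rw [hΩcl]
    _ = ∫ p : ℝ × ℝ, (closure Ω).indicator (uX u) p :=
        (integral_indicator isClosed_closure.measurableSet).symm
    _ = ∫ p : ℝ × ℝ, (closure Ω).indicator (uX u) p ∂((volume : Measure ℝ).prod volume) := rfl
    _ = ∫ y : ℝ, ∫ x : ℝ, (closure Ω).indicator (uX u) (x, y) :=
        integral_prod_symm _ hIntInd'
    _ = 0 := by
        rw [integral_congr_ae (key.mono fun y hy => hy)]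
        exact integral_zero _ _

noncomputable def swCLE : (ℝ × ℝ) ≃L[ℝ] (ℝ × ℝ) := ContinuousLinearEquiv.prodComm ℝ ℝ ℝ

lemma norm_swap' (p : ℝ × ℝ) : ‖Prod.swap p‖ = ‖p‖ := by
  simp [Prod.norm_def, max_comm]

lemma measurePreserving_swap' :
    MeasurePreserving Prod.swap (volume : Measure (ℝ × ℝ)) volume :=
  Measure.measurePreserving_swap

lemma volume_preimage_swap_null {N : Set (ℝ × ℝ)} (hN : volume N = 0) :
    volume (Prod.swap ⁻¹' N) = 0 := by
  have h1 : N ⊆ toMeasurable volume N := subset_toMeasurable _ _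
  have h2 : volume (toMeasurable volume N) = 0 := by
    rw [measure_toMeasurable]; exact hN
  refine measure_mono_null (preimage_mono h1) ?_
  rw [measurePreserving_swap'.measure_preimage
    (measurableSet_toMeasurable _ _).nullMeasurableSet]
  exact h2

lemma closure_swap_preimage (Ω : Set (ℝ × ℝ)) :
    closure (Prod.swap ⁻¹' Ω) = Prod.swap ⁻¹' closure Ω :=
  ((Homeomorph.prodComm ℝ ℝ).preimage_closure Ω).symm

lemma frontier_swap_preimage (Ω : Set (ℝ × ℝ)) :
    frontier (Prod.swap ⁻¹' Ω) = Prod.swap ⁻¹' frontier Ω :=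
  ((Homeomorph.prodComm ℝ ℝ).preimage_frontier Ω).symm

lemma fderiv_swap (u : ℝ × ℝ → ℝ) (p : ℝ × ℝ) :
    fderiv ℝ (u ∘ Prod.swap) p
      = (fderiv ℝ u (Prod.swap p)).comp (swCLE : (ℝ × ℝ) →L[ℝ] (ℝ × ℝ)) :=
  swCLE.comp_right_fderiv

lemma uX_swap (u : ℝ × ℝ → ℝ) (p : ℝ × ℝ) :
    uX (u ∘ Prod.swap) p = uY u (Prod.swap p) := by
  rw [uX, uY, fderiv_swap]; rfl

lemma memU_swap {Ω : Set (ℝ × ℝ)} {u : ℝ × ℝ → ℝ} (hu : MemU Ω u) :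
    MemU (Prod.swap ⁻¹' Ω) (u ∘ Prod.swap) := by
  obtain ⟨hcont, hconc, hdiff, ⟨C, hC⟩, hbound⟩ := hu
  have hdiff_iff : ∀ p : ℝ × ℝ, DifferentiableAt ℝ (u ∘ Prod.swap) p ↔
      DifferentiableAt ℝ u (Prod.swap p) :=
    fun p => swCLE.comp_right_differentiableAt_iff
  refine ⟨?_, ?_, ?_, ?_, ?_⟩
  · rw [closure_swap_preimage]
    exact hcont.comp continuous_swap.continuousOn (fun p hp => hp)
  · exact ⟨fun p hp q hq a b ha hb hab => hconc.1 hp hq ha hb hab,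
      fun p hp q hq a b ha hb hab => hconc.2 hp hq ha hb hab⟩
  · have hbadnull : volume ({q | DifferentiableAt ℝ u q}ᶜ ∩ Ω) = 0 := by
      have h1 := hdiff
      rw [ae_iff] at h1
      have h2 : (volume.restrict Ω) ({q | DifferentiableAt ℝ u q}ᶜ) = 0 := h1
      rwa [Measure.restrict_apply (measurableSet_of_differentiableAt ℝ u).compl] at h2
    rw [ae_iff]
    show (volume.restrict (Prod.swap ⁻¹' Ω))
      ({p | DifferentiableAt ℝ (u ∘ Prod.swap) p}ᶜ) = 0
    rw [Measure.restrict_apply (measurableSet_of_differentiableAt ℝ _).compl]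
    have hss : {p | DifferentiableAt ℝ (u ∘ Prod.swap) p}ᶜ ∩ (Prod.swap ⁻¹' Ω)
        = Prod.swap ⁻¹' ({q | DifferentiableAt ℝ u q}ᶜ ∩ Ω) := by
      ext p
      simp [hdiff_iff p]
    rw [hss]
    exact volume_preimage_swap_null hbadnull
  · refine ⟨max C 0, fun p hp hdp => ?_⟩
    have hdu : DifferentiableAt ℝ u (Prod.swap p) := (hdiff_iff p).1 hdp
    rw [fderiv_swap]
    have hnorm : ‖(swCLE : (ℝ × ℝ) →L[ℝ] (ℝ × ℝ))‖ ≤ 1 := by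
      refine ContinuousLinearMap.opNorm_le_bound _ zero_le_one (fun q => ?_)
      rw [one_mul]
      exact le_of_eq (norm_swap' q)
    calc ‖(fderiv ℝ u (Prod.swap p)).comp (swCLE : (ℝ × ℝ) →L[ℝ] (ℝ × ℝ))‖
        ≤ ‖fderiv ℝ u (Prod.swap p)‖ * ‖(swCLE : (ℝ × ℝ) →L[ℝ] (ℝ × ℝ))‖ :=
          ContinuousLinearMap.opNorm_comp_le _ _
      _ ≤ max C 0 * 1 := by
          refine mul_le_mul ((hC _ hp hdu).trans (le_max_left _ _)) hnorm
            (norm_nonneg _) (le_max_right _ _)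
      _ = max C 0 := mul_one _
  · intro p hp
    rw [frontier_swap_preimage] at hp
    exact hbound _ hp

lemma restrict_closure_eq {Ω : Set (ℝ × ℝ)} (hconv : Convex ℝ Ω) :
    (volume : Measure (ℝ × ℝ)).restrict Ω = volume.restrict (closure Ω) := by
  have hfront : volume (frontier Ω) = 0 := hconv.addHaar_frontier volume
  refine Measure.restrict_congr_set ?_
  rw [ae_eq_set]
  constructor
  · have he : Ω \ closure Ω = ∅ := diff_eq_empty.2 subset_closure
    rw [he]; exact measure_empty
  · refine measure_mono_null (fun p hp => ?_) hfront
    rcases (closure_eq_interior_union_frontier Ω ▸ hp.1) with h | h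
    · exact absurd (interior_subset h) hp.2
    · exact h

lemma integral_uY_eq_zero {Ω : Set (ℝ × ℝ)} (hconv : Convex ℝ Ω)
    (hbdd : Bornology.IsBounded Ω) {u : ℝ × ℝ → ℝ} (hu : MemU Ω u) :
    ∫ p in Ω, uY u p = 0 := by
  set Ω' : Set (ℝ × ℝ) := Prod.swap ⁻¹' Ω with hΩ'
  have hconv' : Convex ℝ Ω' := fun p hp q hq a b ha hb hab => hconv hp hq ha hb hab
  have hbdd' : Bornology.IsBounded Ω' := by
    obtain ⟨R, hR⟩ := (Metric.isBounded_iff_subset_closedBall 0).1 hbdd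
    refine Metric.isBounded_closedBall (x := (0 : ℝ × ℝ)) (r := R) |>.subset ?_
    intro p hp
    have h1 : Prod.swap p ∈ Metric.closedBall (0 : ℝ × ℝ) R := hR hp
    rw [Metric.mem_closedBall, dist_zero_right] at h1 ⊢
    rwa [norm_swap'] at h1
  have hu' := memU_swap hu
  have h0 : ∫ p in Ω', uX (u ∘ Prod.swap) p = 0 :=
    integral_uX_eq_zero hconv' hbdd' hu'
  have hemb : MeasurableEmbedding (Prod.swap : ℝ × ℝ → ℝ × ℝ) :=
    (MeasurableEquiv.prodComm (α := ℝ) (β := ℝ)).measurableEmbedding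
  calc ∫ p in Ω, uY u p = ∫ p in closure Ω, uY u p := by rw [restrict_closure_eq hconv]
    _ = ∫ p in Prod.swap ⁻¹' closure Ω, uY u (Prod.swap p) :=
        (measurePreserving_swap'.setIntegral_preimage_emb hemb (uY u) (closure Ω)).symm
    _ = ∫ p in closure Ω', uY u (Prod.swap p) := by rw [closure_swap_preimage]
    _ = ∫ p in closure Ω', uX (u ∘ Prod.swap) p := by
        refine integral_congr_ae (ae_of_all _ fun p => ?_)
        rw [uX_swap]
    _ = ∫ p in Ω', uX (u ∘ Prod.swap) p := by rw [restrict_closure_eq hconv']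
    _ = 0 := h0

/-- `n` is an outward normal of a support line to `Ω` at `ξ`. -/
def IsSupportDir (Ω : Set (ℝ × ℝ)) (ξ n : ℝ × ℝ) : Prop :=
  n ≠ 0 ∧ ∀ q ∈ Ω, n.1 * q.1 + n.2 * q.2 ≤ n.1 * ξ.1 + n.2 * ξ.2

/-- `ξ` is a regular boundary point: the support line at `ξ` is unique. -/
def IsRegularPoint (Ω : Set (ℝ × ℝ)) (ξ : ℝ × ℝ) : Prop :=
  ξ ∈ frontier Ω ∧
    ∀ n m : ℝ × ℝ, IsSupportDir Ω ξ n → IsSupportDir Ω ξ m → ∃ t : ℝ, m = t • n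

/-- `ξ` is a singular boundary point: `Ω` has more than one support line at `ξ`. -/
def IsSingularPoint (Ω : Set (ℝ × ℝ)) (ξ : ℝ × ℝ) : Prop :=
  ξ ∈ frontier Ω ∧
    ∃ n m : ℝ × ℝ, IsSupportDir Ω ξ n ∧ IsSupportDir Ω ξ m ∧ ¬∃ t : ℝ, m = t • n

/-- Both vertical support lines angular, `K` the (finite) supremum of
`(∫_Ω u_x²)/(∫_Ω u_y²)` over nonzero `u ∈ U_Ω`. If
`f(ζ) = f(0) + αζ₁ + βζ₂ - aζ₁² + bζ₂² + o(|ζ|²)` with `a, b > 0` and `b/a > K`,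
then `u ≡ 0` is a local minimum. -/
theorem stmt7 (Ω : Set (ℝ × ℝ)) (hconv : Convex ℝ Ω) (hbdd : Bornology.IsBounded Ω)
    (hint : (interior Ω).Nonempty)
    (hangL : AngularSupportAt Ω (leftX Ω)) (hangR : AngularSupportAt Ω (rightX Ω))
    (K : ℝ) (hK0 : 0 < K)
    (hKub : ∀ u : ℝ × ℝ → ℝ, MemU Ω u → Ix Ω u ≤ K * Iy Ω u)
    (hKlub : ∀ K' : ℝ, K' < K → ∃ u : ℝ × ℝ → ℝ, MemU Ω u ∧ (∃ p ∈ Ω, u p ≠ 0) ∧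
      K' * Iy Ω u < Ix Ω u)
    (f : ℝ × ℝ → ℝ) (hf : Continuous f) (α β a b : ℝ) (ha : 0 < a) (hb : 0 < b)
    (hTaylor : (fun ζ : ℝ × ℝ =>
        f ζ - (f 0 + α * ζ.1 + β * ζ.2 - a * ζ.1 ^ 2 + b * ζ.2 ^ 2))
        =o[nhds (0 : ℝ × ℝ)] fun ζ : ℝ × ℝ => ‖ζ‖ ^ 2)
    (hba : K < b / a) :
    ZeroIsLocalMin Ω f := by
  -- choose ε
  have hKa : K * a < b := by
    rw [lt_div_iff₀ ha] at hba; linarith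
  set ε : ℝ := (b - K * a) / (2 * (K + 1)) with hεdef
  have hεpos : 0 < ε := by
    apply div_pos (by linarith) (by linarith)
  have hcoef : (a + ε) * K + ε ≤ b := by
    have h1 : ε * (K + 1) = (b - K * a) / 2 := by
      rw [hεdef]; field_simp
    nlinarith
  -- Taylor bound
  have hTay : ∀ᶠ ζ : ℝ × ℝ in nhds 0,
      ‖f ζ - (f 0 + α * ζ.1 + β * ζ.2 - a * ζ.1 ^ 2 + b * ζ.2 ^ 2)‖ ≤ ε * ‖‖ζ‖ ^ 2‖ :=
    hTaylor.def hεpos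
  rw [Metric.eventually_nhds_iff] at hTay
  obtain ⟨δ₁, hδ₁, hball⟩ := hTay
  refine ⟨min δ₁ 1, lt_min hδ₁ one_pos, fun u hu hC1 => ?_⟩
  obtain ⟨C, hC⟩ := hu.2.2.2.1
  set C' : ℝ := max C 0 with hC'def
  have hfront : volume (frontier Ω) = 0 := hconv.addHaar_frontier volume
  haveI : IsFiniteMeasure ((volume : Measure (ℝ × ℝ)).restrict Ω) :=
    ⟨by rw [Measure.restrict_apply_univ]; exact hbdd.measure_lt_top⟩
  have hnorm10 : ‖((1:ℝ), (0:ℝ))‖ = 1 := by simp [Prod.norm_def]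
  have hnorm01 : ‖((0:ℝ), (1:ℝ))‖ = 1 := by simp [Prod.norm_def]
  have hbndX : ∀ p ∈ Ω, |uX u p| ≤ C' := by
    intro p hp
    by_cases hdp : DifferentiableAt ℝ u p
    · calc |uX u p| = ‖fderiv ℝ u p (1, 0)‖ := by rw [Real.norm_eq_abs]; rfl
        _ ≤ ‖fderiv ℝ u p‖ * ‖((1:ℝ), (0:ℝ))‖ := (fderiv ℝ u p).le_opNorm _
        _ = ‖fderiv ℝ u p‖ := by rw [hnorm10, mul_one]
        _ ≤ C' := (hC p hp hdp).trans (le_max_left _ _)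
    · simp only [uX, fderiv_zero_of_not_differentiableAt hdp]
      simp [hC'def, le_max_right C 0]
  have hbndY : ∀ p ∈ Ω, |uY u p| ≤ C' := by
    intro p hp
    by_cases hdp : DifferentiableAt ℝ u p
    · calc |uY u p| = ‖fderiv ℝ u p (0, 1)‖ := by rw [Real.norm_eq_abs]; rfl
        _ ≤ ‖fderiv ℝ u p‖ * ‖((0:ℝ), (1:ℝ))‖ := (fderiv ℝ u p).le_opNorm _
        _ = ‖fderiv ℝ u p‖ := by rw [hnorm01, mul_one]
        _ ≤ C' := (hC p hp hdp).trans (le_max_left _ _)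
    · simp only [uY, fderiv_zero_of_not_differentiableAt hdp]
      simp [hC'def, le_max_right C 0]
  -- smallness of the gradient from the C¹-norm bound
  have hsmall : ∀ p ∈ Ω, ‖(uX u p, uY u p)‖ < δ₁ := by
    intro p hp
    by_cases hdp : DifferentiableAt ℝ u p
    · set A := sSup ((fun p => |u p|) '' Ω) with hA
      set B := sSup ((fun p => |uX u p|) '' {p ∈ Ω | DifferentiableAt ℝ u p}) with hB
      set Cc := sSup ((fun p => |uY u p|) '' {p ∈ Ω | DifferentiableAt ℝ u p}) with hCc
      have hA0 : 0 ≤ A := Real.sSup_nonneg (by rintro x ⟨q, _, rfl⟩; exact abs_nonneg _)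
      have hB0 : 0 ≤ B := Real.sSup_nonneg (by rintro x ⟨q, _, rfl⟩; exact abs_nonneg _)
      have hCc0 : 0 ≤ Cc := Real.sSup_nonneg (by rintro x ⟨q, _, rfl⟩; exact abs_nonneg _)
      have hBdX : BddAbove ((fun p => |uX u p|) '' {p ∈ Ω | DifferentiableAt ℝ u p}) :=
        ⟨C', by rintro x ⟨q, ⟨hq, _⟩, rfl⟩; exact hbndX q hq⟩
      have hBdY : BddAbove ((fun p => |uY u p|) '' {p ∈ Ω | DifferentiableAt ℝ u p}) :=
        ⟨C', by rintro x ⟨q, ⟨hq, _⟩, rfl⟩; exact hbndY q hq⟩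
      have hxB : |uX u p| ≤ B := le_csSup hBdX ⟨p, ⟨hp, hdp⟩, rfl⟩
      have hyC : |uY u p| ≤ Cc := le_csSup hBdY ⟨p, ⟨hp, hdp⟩, rfl⟩
      have hlt : A + B + Cc < min δ₁ 1 := hC1
      have hmin : min δ₁ 1 ≤ δ₁ := min_le_left _ _
      rw [Prod.norm_def]
      rw [max_lt_iff]
      constructor
      · rw [Real.norm_eq_abs]; linarith
      · rw [Real.norm_eq_abs]; linarith
    · simp only [uX, uY, fderiv_zero_of_not_differentiableAt hdp]
      simpa using hδ₁
  -- pointwise Taylor inequality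
  have hpt : ∀ p ∈ Ω,
      f 0 + α * uX u p + β * uY u p - (a + ε) * (uX u p) ^ 2 + (b - ε) * (uY u p) ^ 2
        ≤ f (uX u p, uY u p) := by
    intro p hp
    set ζ : ℝ × ℝ := (uX u p, uY u p) with hζ
    have hdist : dist ζ 0 < δ₁ := by
      rw [dist_zero_right]; exact hsmall p hp
    have hb1 := hball hdist
    have hsq : ‖ζ‖ ^ 2 ≤ ζ.1 ^ 2 + ζ.2 ^ 2 := by
      rw [Prod.norm_def]
      rcases max_cases ‖ζ.1‖ ‖ζ.2‖ with ⟨h1, _⟩ | ⟨h1, _⟩ <;>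
        rw [h1, Real.norm_eq_abs, sq_abs]
      · nlinarith [sq_nonneg ζ.2]
      · nlinarith [sq_nonneg ζ.1]
    have hb2 : ‖‖ζ‖ ^ 2‖ = ‖ζ‖ ^ 2 := by
      rw [Real.norm_eq_abs]; exact abs_of_nonneg (sq_nonneg _)
    rw [hb2] at hb1
    have hb3 : |f ζ - (f 0 + α * ζ.1 + β * ζ.2 - a * ζ.1 ^ 2 + b * ζ.2 ^ 2)|
        ≤ ε * (ζ.1 ^ 2 + ζ.2 ^ 2) := by
      rw [← Real.norm_eq_abs]
      exact hb1.trans (mul_le_mul_of_nonneg_left hsq hεpos.le)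
    rw [abs_le] at hb3
    have := hb3.1
    nlinarith [this]
  -- measurability and integrability
  have hXmeas : Measurable (uX u) := measurable_fderiv_apply_const ℝ u (1, 0)
  have hYmeas : Measurable (uY u) := measurable_fderiv_apply_const ℝ u (0, 1)
  have hae_mem : ∀ᵐ p ∂(volume : Measure (ℝ × ℝ)).restrict Ω, p ∈ Ω :=
    ae_restrict_mem₀ (nullMeasurableSet_of_null_frontier hfront)
  have hIntX : IntegrableOn (uX u) Ω volume := by
    refine ⟨hXmeas.aestronglyMeasurable, HasFiniteIntegral.of_bounded (C := C') ?_⟩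
    filter_upwards [hae_mem] with p hp
    rw [Real.norm_eq_abs]; exact hbndX p hp
  have hIntY : IntegrableOn (uY u) Ω volume := by
    refine ⟨hYmeas.aestronglyMeasurable, HasFiniteIntegral.of_bounded (C := C') ?_⟩
    filter_upwards [hae_mem] with p hp
    rw [Real.norm_eq_abs]; exact hbndY p hp
  have hIntX2 : IntegrableOn (fun p => (uX u p) ^ 2) Ω volume := by
    refine ⟨((hXmeas.pow_const 2).aestronglyMeasurable),
      HasFiniteIntegral.of_bounded (C := C' ^ 2) ?_⟩
    filter_upwards [hae_mem] with p hp
    rw [Real.norm_eq_abs, abs_pow]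
    exact pow_le_pow_left₀ (abs_nonneg _) (hbndX p hp) 2
  have hIntY2 : IntegrableOn (fun p => (uY u p) ^ 2) Ω volume := by
    refine ⟨((hYmeas.pow_const 2).aestronglyMeasurable),
      HasFiniteIntegral.of_bounded (C := C' ^ 2) ?_⟩
    filter_upwards [hae_mem] with p hp
    rw [Real.norm_eq_abs, abs_pow]
    exact pow_le_pow_left₀ (abs_nonneg _) (hbndY p hp) 2
  obtain ⟨M₀, hM₀⟩ := (isCompact_closedBall (0 : ℝ × ℝ) δ₁).exists_bound_of_continuousOn
    hf.continuousOn
  have hIntF : IntegrableOn (fun p => f (uX u p, uY u p)) Ω volume := by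
    refine ⟨(hf.measurable.comp (hXmeas.prodMk hYmeas)).aestronglyMeasurable,
      HasFiniteIntegral.of_bounded (C := M₀) ?_⟩
    filter_upwards [hae_mem] with p hp
    exact hM₀ _ (Metric.mem_closedBall.2 (by
      rw [dist_zero_right]; exact (hsmall p hp).le))
  have hIntG : IntegrableOn (fun p => f 0 + α * uX u p + β * uY u p
      - (a + ε) * (uX u p) ^ 2 + (b - ε) * (uY u p) ^ 2) Ω volume := by
    exact ((((integrableOn_const hbdd.measure_lt_top.ne).add
      (hIntX.const_mul α)).add (hIntY.const_mul β)).sub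
      (hIntX2.const_mul (a + ε))).add (hIntY2.const_mul (b - ε))
  -- integral identities
  have hIX : ∫ p in Ω, uX u p = 0 := integral_uX_eq_zero hconv hbdd hu
  have hIY : ∫ p in Ω, uY u p = 0 := integral_uY_eq_zero hconv hbdd hu
  have hIy_nonneg : 0 ≤ Iy Ω u := integral_nonneg fun p => sq_nonneg _
  have hIxIy : Ix Ω u ≤ K * Iy Ω u := hKub u hu
  -- value at zero
  have hF0 : Fres Ω f (fun _ => 0) = ∫ p in Ω, f 0 := by
    have h00 : ((0 : ℝ), (0 : ℝ)) = (0 : ℝ × ℝ) := rfl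
    simp only [Fres, uX, uY, fderiv_const_apply, ContinuousLinearMap.zero_apply, h00]
  -- expand integral of G
  have hGsplit : ∫ p in Ω, (f 0 + α * uX u p + β * uY u p
      - (a + ε) * (uX u p) ^ 2 + (b - ε) * (uY u p) ^ 2)
      = (∫ p in Ω, f 0) + α * (∫ p in Ω, uX u p) + β * (∫ p in Ω, uY u p)
        - (a + ε) * Ix Ω u + (b - ε) * Iy Ω u := by
    rw [integral_add _ (hIntY2.const_mul _), integral_sub _ (hIntX2.const_mul _),
      integral_add _ (hIntY.const_mul _), integral_add _ (hIntX.const_mul _)]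
    · rw [integral_const_mul, integral_const_mul, integral_const_mul, integral_const_mul]
      rfl
    · exact integrableOn_const hbdd.measure_lt_top.ne
    · exact (integrableOn_const hbdd.measure_lt_top.ne).add (hIntX.const_mul α)
    · exact ((integrableOn_const hbdd.measure_lt_top.ne).add
        (hIntX.const_mul α)).add (hIntY.const_mul β)
    · exact (((integrableOn_const hbdd.measure_lt_top.ne).add
        (hIntX.const_mul α)).add (hIntY.const_mul β)).sub (hIntX2.const_mul (a + ε))
  -- compare
  have hmono : ∫ p in Ω, (f 0 + α * uX u p + β * uY u p
      - (a + ε) * (uX u p) ^ 2 + (b - ε) * (uY u p) ^ 2)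
      ≤ ∫ p in Ω, f (uX u p, uY u p) := by
    refine integral_mono_ae hIntG hIntF ?_
    filter_upwards [hae_mem] with p hp
    exact hpt p hp
  rw [hF0]
  have hfinal : (b - ε) * Iy Ω u - (a + ε) * Ix Ω u ≥ 0 := by
    nlinarith [hIxIy, hIy_nonneg, ha.le, hεpos.le, hcoef]
  calc ∫ p in Ω, f 0
      ≤ (∫ p in Ω, f 0) + ((b - ε) * Iy Ω u - (a + ε) * Ix Ω u) := by linarith
    _ = (∫ p in Ω, f 0) + α * (∫ p in Ω, uX u p) + β * (∫ p in Ω, uY u p)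
        - (a + ε) * Ix Ω u + (b - ε) * Iy Ω u := by rw [hIX, hIY]; ring
    _ = ∫ p in Ω, (f 0 + α * uX u p + β * uY u p
        - (a + ε) * (uX u p) ^ 2 + (b - ε) * (uY u p) ^ 2) := hGsplit.symm
    _ ≤ ∫ p in Ω, f (uX u p, uY u p) := hmono
    _ = Fres Ω f u := rfl
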